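/- Let K/k be a finite separable field extension and B a hereditary finite-dimensional k-algebra. Then the scalar extension B ⊗_k K is a hereditary finite-dimensional K-algebra. -/

import Mathlib

open TensorProduct

universe u v

/-- A ring is (left) hereditary if every submodule of a projective module is projective. -/
def IsHereditaryRing (R : Type u) [Ring R] : Prop :=
  ∀ (M : Type u) [AddCommGroup M] [Module R M], Module.Projective R M →
    ∀ N : Submodule R M, Module.Projective R N

section Helpers


theorem exists_sep_elt (k K : Type*) [Field k] [Field K] [Algebra k K]
    [FiniteDimensional k K] [Algebra.IsSeparable k K] :
    ∃ (ι : Type) (_ : Fintype ι) (x y : ι → K),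
      (∑ i, y i * x i = 1) ∧
      ∀ c : K, (∑ i, (c * y i) ⊗ₜ[k] x i) = ∑ i, y i ⊗ₜ[k] (c * x i) := by
  classical
  set n := Module.finrank k K
  let b : Module.Basis (Fin n) k K := Module.finBasis k K
  have hnd := traceForm_nondegenerate k K
  let d : Module.Basis (Fin n) k K := (Algebra.traceForm k K).dualBasis hnd b
  have hdb : ∀ i j, Algebra.trace k K (d i * b j) = if j = i then 1 else 0 := fun i j => by
    simpa [Algebra.traceForm_apply] using
      (Algebra.traceForm k K).apply_dualBasis_left hnd b i j
  have hbd : ∀ i j, Algebra.trace k K (b i * d j) = if i = j then 1 else 0 := fun i j => by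
    simpa [Algebra.traceForm_apply] using
      (Algebra.traceForm k K).apply_dualBasis_right hnd
        (Algebra.traceForm_isSymm (R := k) (S := K)) b i j
  have hreprd : ∀ (v : K) (i : Fin n), d.repr v i = Algebra.trace k K (v * b i) := fun v i => by
    have := (Algebra.traceForm k K).dualBasis_repr_apply hnd b v i
    rw [Algebra.traceForm_apply] at this
    exact this
  have hreprb : ∀ (v : K) (j : Fin n), b.repr v j = Algebra.trace k K (v * d j) := by
    intro v j
    have h1 : Algebra.trace k K (v * d j)
        = ∑ m, b.repr v m • Algebra.trace k K (b m * d j) := by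
      conv_lhs => rw [← b.sum_repr v]
      simp only [Finset.sum_mul, smul_mul_assoc, map_sum, map_smul, smul_eq_mul]
    rw [h1]
    simp [hbd]
  -- trace via matrix
  have htr : ∀ w : K, Algebra.trace k K w = ∑ m, b.repr (w * b m) m := by
    intro w
    rw [Algebra.trace_eq_matrix_trace b w, Matrix.trace]
    simp [Matrix.diag, Algebra.leftMulMatrix_eq_repr_mul]
  refine ⟨Fin n, inferInstance, b, d, ?_, ?_⟩
  · -- ∑ d i * b i = 1
    have key : ∀ w : K, Algebra.traceForm k K (∑ i, d i * b i - 1) w = 0 := by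
      intro w
      rw [Algebra.traceForm_apply, sub_mul, one_mul, map_sub, sub_eq_zero, Finset.sum_mul,
        map_sum]
      rw [htr w]
      refine Finset.sum_congr rfl fun m _ => ?_
      rw [hreprb]
      ring_nf
    exact sub_eq_zero.mp (hnd.1 _ key)
  · -- bimodule identity
    intro c
    have expL : ∀ i, c * d i = ∑ j, Algebra.trace k K (c * d i * b j) • d j := fun i => by
      conv_lhs => rw [← d.sum_repr (c * d i)]
      exact Finset.sum_congr rfl fun j _ => by rw [hreprd]
    have expR : ∀ i, c * b i = ∑ j, Algebra.trace k K (c * b i * d j) • b j := fun i => by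
      conv_lhs => rw [← b.sum_repr (c * b i)]
      exact Finset.sum_congr rfl fun j _ => by rw [hreprb]
    have s1 : ∀ i, (c * d i) ⊗ₜ[k] b i
        = ∑ j, Algebra.trace k K (c * d i * b j) • (d j ⊗ₜ[k] b i) := fun i => by
      conv_lhs => rw [expL i]
      rw [sum_tmul]
      simp_rw [smul_tmul']
    have s4 : ∀ i, d i ⊗ₜ[k] (c * b i)
        = ∑ j, Algebra.trace k K (c * b i * d j) • (d i ⊗ₜ[k] b j) := fun i => by
      conv_lhs => rw [expR i]
      rw [tmul_sum]
      simp_rw [tmul_smul]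
    calc ∑ i, (c * d i) ⊗ₜ[k] b i
        = ∑ i, ∑ j, Algebra.trace k K (c * d i * b j) • (d j ⊗ₜ[k] b i) :=
          Finset.sum_congr rfl fun i _ => s1 i
      _ = ∑ i, ∑ j, Algebra.trace k K (c * b j * d i) • (d j ⊗ₜ[k] b i) := by
          refine Finset.sum_congr rfl fun i _ => Finset.sum_congr rfl fun j _ => ?_
          rw [show c * d i * b j = c * b j * d i by ring]
      _ = ∑ j, ∑ i, Algebra.trace k K (c * b j * d i) • (d j ⊗ₜ[k] b i) := Finset.sum_comm
      _ = ∑ i, d i ⊗ₜ[k] (c * b i) := (Finset.sum_congr rfl fun j _ => (s4 j).symm)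

variable (k K B : Type*) [Field k] [Field K] [Algebra k K] [FiniteDimensional k K]
  [Ring B] [Algebra k B]



omit [FiniteDimensional k K] in
theorem smul_eq_includeLeft_mul (c : B) (a : B ⊗[k] K) :
    c • a = Algebra.TensorProduct.includeLeftRingHom (R := k) c * a := by
  induction a using TensorProduct.induction_on with
  | zero => simp
  | tmul x y =>
      rw [show Algebra.TensorProduct.includeLeftRingHom (R := k) c = c ⊗ₜ[k] (1 : K) from rfl,
        Algebra.TensorProduct.tmul_mul_tmul, one_mul, smul_tmul', smul_eq_mul]
  | add u v hu hv => rw [smul_add, hu, hv, mul_add]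

/-- `B ⊗[k] K` is projective as a left `B`-module. -/
theorem proj_left : Module.Projective B (B ⊗[k] K) := by
  classical
  set f : B →+* B ⊗[k] K := Algebra.TensorProduct.includeLeftRingHom (R := k) with hf
  have hsmul : ∀ (c : B) (a : B ⊗[k] K), c • a = f c * a := smul_eq_includeLeft_mul k K B
  let b : Module.Basis (Fin (Module.finrank k K)) k K := Module.finBasis k K
  let Φ : B →ₗ[k] K →ₗ[k] (B ⊗[k] K →₀ B) := LinearMap.mk₂ k
    (fun c x => ∑ i, Finsupp.single ((1 : B) ⊗ₜ[k] b i) (b.repr x i • c))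
    (fun c c' x => by simp [smul_add, Finsupp.single_add, Finset.sum_add_distrib])
    (fun r c x => by
      rw [Finset.smul_sum]
      refine Finset.sum_congr rfl fun i _ => ?_
      rw [Finsupp.smul_single, smul_comm])
    (fun c x x' => by simp [add_smul, Finsupp.single_add, Finset.sum_add_distrib])
    (fun r c x => by
      rw [Finset.smul_sum]
      refine Finset.sum_congr rfl fun i _ => ?_
      rw [Finsupp.smul_single, map_smul, Finsupp.smul_apply, smul_assoc])
  let s₀ : B ⊗[k] K →ₗ[k] (B ⊗[k] K →₀ B) := TensorProduct.lift Φ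
  have hΦ : ∀ (c : B) (x : K),
      s₀ (c ⊗ₜ[k] x) = ∑ i, Finsupp.single ((1 : B) ⊗ₜ[k] b i) (b.repr x i • c) := fun c x => rfl
  have hs₀ : ∀ (c' : B) (a : B ⊗[k] K), s₀ (c' • a) = c' • s₀ a := by
    intro c' a
    induction a using TensorProduct.induction_on with
    | zero => simp
    | tmul c x =>
        rw [hsmul, hf]
        rw [show f c' * (c ⊗ₜ[k] x) = (c' * c) ⊗ₜ[k] x by
          rw [show f c' = c' ⊗ₜ[k] (1 : K) from rfl, Algebra.TensorProduct.tmul_mul_tmul, one_mul]]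
        rw [hΦ, hΦ, Finset.smul_sum]
        refine Finset.sum_congr rfl fun i _ => ?_
        rw [Finsupp.smul_single]
        congr 1
        rw [smul_eq_mul, mul_smul_comm]
    | add u v hu hv => rw [smul_add, map_add, hu, hv, map_add, smul_add]
  refine Module.projective_def'.mpr ⟨⟨⟨s₀, s₀.map_add⟩, fun m x => hs₀ m x⟩,
    LinearMap.ext fun a => ?_⟩
  show Finsupp.linearCombination B id (s₀ a) = a
  induction a using TensorProduct.induction_on with
  | zero => simp
  | tmul c x =>
      rw [hΦ, map_sum]
      have : ∀ i, Finsupp.linearCombination B id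
          (Finsupp.single ((1 : B) ⊗ₜ[k] b i) (b.repr x i • c))
          = c ⊗ₜ[k] (b.repr x i • b i) := by
        intro i
        rw [Finsupp.linearCombination_single, id, hsmul, hf]
        rw [show f (b.repr x i • c) = (b.repr x i • c) ⊗ₜ[k] (1 : K) from rfl,
          Algebra.TensorProduct.tmul_mul_tmul, mul_one, one_mul, smul_tmul]
      simp_rw [this]
      rw [← tmul_sum, b.sum_repr]
  | add u v hu hv => rw [map_add, map_add, hu, hv]


/-- Transitivity of projectivity along a ring hom `f : R →+* S`. -/
theorem proj_trans {R S : Type*} [Ring R] [Ring S] (f : R →+* S) [Module R S]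
    (hrs : ∀ (r : R) (s : S), r • s = f r * s)
    (hS : Module.Projective R S)
    (M : Type*) [AddCommGroup M] [Module S M] (hM : Module.Projective S M) :
    @Module.Projective R _ M _ (Module.compHom M f) := by
  classical
  letI instM : Module R M := Module.compHom M f
  have hMsmul : ∀ (r : R) (m : M), r • m = f r • m := fun _ _ => rfl
  obtain ⟨s, hs⟩ := hM
  -- the total map and the section, as `R`-linear maps
  let g : (M →₀ S) →ₗ[R] M :=
    { toFun := Finsupp.linearCombination S id
      map_add' := map_add _
      map_smul' := fun r l => by
        show Finsupp.linearCombination S id (r • l) = r • Finsupp.linearCombination S id l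
        rw [hMsmul, ← map_smul (Finsupp.linearCombination S id) (f r) l]
        congr 1
        ext a
        rw [Finsupp.smul_apply, Finsupp.smul_apply, hrs, smul_eq_mul] }
  let sR : M →ₗ[R] (M →₀ S) :=
    { toFun := s
      map_add' := map_add _
      map_smul' := fun r m => by
        show s (r • m) = r • s m
        rw [hMsmul, map_smul]
        ext a
        rw [Finsupp.smul_apply, Finsupp.smul_apply, hrs, smul_eq_mul] }
  haveI : Module.Projective R S := hS
  haveI : Module.Projective R (Π₀ _ : M, S) := inferInstance
  haveI hFP : Module.Projective R (M →₀ S) :=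
    Module.Projective.of_equiv (finsuppLequivDFinsupp (R := R) (M := S) (ι := M)).symm
  exact Module.Projective.of_split sR g (by ext m; exact hs m)

variable [Algebra.IsSeparable k K]

set_option maxHeartbeats 1000000 in
/-- A `B ⊗[k] K`-module which is projective over `B` is projective over `B ⊗[k] K`. -/
theorem proj_ascend (P : Type*) [AddCommGroup P] [Module (B ⊗[k] K) P]
    (hP : @Module.Projective B _ P _
      (Module.compHom P (Algebra.TensorProduct.includeLeftRingHom (R := k) : B →+* B ⊗[k] K))) :
    Module.Projective (B ⊗[k] K) P := by
  classical
  set f : B →+* B ⊗[k] K := Algebra.TensorProduct.includeLeftRingHom (R := k) with hf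
  letI instP : Module B P := Module.compHom P f
  haveI : Module.Projective B P := hP
  have hPsmul : ∀ (c : B) (q : P), c • q = f c • q := fun _ _ => rfl
  have hA : ∀ (c : B) (a : B ⊗[k] K), c • a = f c * a := smul_eq_includeLeft_mul k K B
  have tf : ∀ (c : B) (u : K), f c * ((1 : B) ⊗ₜ[k] u) = c ⊗ₜ[k] u := fun c u => by
    rw [show f c = c ⊗ₜ[k] (1 : K) from rfl, Algebra.TensorProduct.tmul_mul_tmul, mul_one,
      one_mul]
  have tf' : ∀ (c : B) (u : K), ((1 : B) ⊗ₜ[k] u) * f c = c ⊗ₜ[k] u := fun c u => by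
    rw [show f c = c ⊗ₜ[k] (1 : K) from rfl, Algebra.TensorProduct.tmul_mul_tmul, mul_one,
      one_mul]
  have tt : ∀ (u v : K), ((1 : B) ⊗ₜ[k] u) * ((1 : B) ⊗ₜ[k] v) = (1 : B) ⊗ₜ[k] (u * v) :=
    fun u v => by rw [Algebra.TensorProduct.tmul_mul_tmul, one_mul]
  obtain ⟨ι, hι, x, y, h1, h2⟩ := exists_sep_elt k K
  letI := hι
  -- the Finsupp total map, and its B-linear restriction
  set F := (P →₀ B ⊗[k] K) with hF
  set g : F →ₗ[B ⊗[k] K] P := Finsupp.linearCombination (B ⊗[k] K) id with hg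
  have hFsmul : ∀ (c : B) (l : F), c • l = f c • l := by
    intro c l
    ext q
    rw [Finsupp.smul_apply, Finsupp.smul_apply, hA, smul_eq_mul]
  let gB : F →ₗ[B] P :=
    { toFun := g
      map_add' := map_add _
      map_smul' := fun c l => by
        show g (c • l) = c • g l
        rw [hFsmul, map_smul, hPsmul] }
  have hsurj : Function.Surjective gB := fun p =>
    ⟨Finsupp.single p 1, by
      show Finsupp.linearCombination (B ⊗[k] K) id (Finsupp.single p 1) = p
      rw [Finsupp.linearCombination_single]
      exact one_smul _ p⟩
  obtain ⟨h, hgh⟩ := Module.projective_lifting_property gB LinearMap.id hsurj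
  have hghp : ∀ q : P, g (h q) = q := fun q => congrArg (fun φ => φ q) hgh
  have hhs : ∀ (c : B) (q : P), h (f c • q) = f c • h q := by
    intro c q
    have := h.map_smul c q
    rwa [hPsmul, hFsmul] at this
  -- the averaged section
  set h' : P → F := fun p => ∑ i, ((1 : B) ⊗ₜ[k] y i) • h (((1 : B) ⊗ₜ[k] x i) • p) with hh'
  have hadd : ∀ p q, h' (p + q) = h' p + h' q := by
    intro p q
    simp [hh', smul_add, map_add, Finset.sum_add_distrib]
  have hzero : h' 0 = 0 := by simp [hh']
  have hc : ∀ (c : B) (p : P), h' (f c • p) = f c • h' p := by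
    intro c p
    rw [hh', Finset.smul_sum]
    refine Finset.sum_congr rfl fun i _ => ?_
    rw [← mul_smul ((1 : B) ⊗ₜ[k] x i) (f c) p, tf' c (x i), ← tf c (x i),
      mul_smul (f c) ((1 : B) ⊗ₜ[k] x i) p, hhs c,
      ← mul_smul ((1 : B) ⊗ₜ[k] y i) (f c) _, tf' c (y i), ← tf c (y i), mul_smul]
  have hk : ∀ (u : K) (p : P), h' (((1 : B) ⊗ₜ[k] u) • p) = ((1 : B) ⊗ₜ[k] u) • h' p := by
    intro u p
    -- the bilinear map Φ and its lift
    have halg : ∀ r : k, algebraMap k (B ⊗[k] K) r = f (algebraMap k B r) := fun r => by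
      rw [Algebra.TensorProduct.algebraMap_apply]; rfl
    let Φ : K →ₗ[k] K →ₗ[k] F := LinearMap.mk₂ k
      (fun v w => ((1 : B) ⊗ₜ[k] v) • h (((1 : B) ⊗ₜ[k] w) • p))
      (fun v v' w => by simp only [tmul_add, add_smul])
      (fun r v w => by simp only [tmul_smul, smul_assoc])
      (fun v w w' => by simp only [tmul_add, add_smul, map_add, smul_add])
      (fun r v w => by
        simp only [tmul_smul]
        rw [Algebra.smul_def r ((1 : B) ⊗ₜ[k] w), halg, mul_smul, hhs,
          ← mul_smul ((1 : B) ⊗ₜ[k] v) (f (algebraMap k B r)) _, tf', ← tf, mul_smul,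
          ← halg, algebraMap_smul])
    let L : K ⊗[k] K →ₗ[k] F := TensorProduct.lift Φ
    have hL : ∀ v w, L (v ⊗ₜ[k] w) = ((1 : B) ⊗ₜ[k] v) • h (((1 : B) ⊗ₜ[k] w) • p) :=
      fun v w => rfl
    calc h' (((1 : B) ⊗ₜ[k] u) • p)
        = ∑ i, ((1 : B) ⊗ₜ[k] y i) • h (((1 : B) ⊗ₜ[k] (u * x i)) • p) := by
          rw [hh']
          refine Finset.sum_congr rfl fun i _ => ?_
          rw [← mul_smul ((1 : B) ⊗ₜ[k] x i) ((1 : B) ⊗ₜ[k] u) p, tt, mul_comm (x i) u]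
      _ = L (∑ i, y i ⊗ₜ[k] (u * x i)) := by rw [map_sum]; rfl
      _ = L (∑ i, (u * y i) ⊗ₜ[k] x i) := by rw [h2 u]
      _ = ∑ i, ((1 : B) ⊗ₜ[k] (u * y i)) • h (((1 : B) ⊗ₜ[k] x i) • p) := by rw [map_sum]; rfl
      _ = ((1 : B) ⊗ₜ[k] u) • h' p := by
          rw [hh', Finset.smul_sum]
          refine Finset.sum_congr rfl fun i _ => ?_
          rw [← mul_smul, tt]
  have hAlin : ∀ (a : B ⊗[k] K) (p : P), h' (a • p) = a • h' p := by
    intro a p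
    induction a using TensorProduct.induction_on with
    | zero => rw [zero_smul, zero_smul, hzero]
    | tmul c u =>
        rw [← tf c u, mul_smul, mul_smul, hc, hk]
    | add a a' ha ha' => rw [add_smul, add_smul, ← ha, ← ha', hadd]
  refine Module.projective_def'.mpr
    ⟨⟨⟨h', fun p q => hadd p q⟩, fun a p => hAlin a p⟩, LinearMap.ext fun p => ?_⟩
  show g (h' p) = p
  rw [hh', map_sum]
  have : ∀ i, g (((1 : B) ⊗ₜ[k] y i) • h (((1 : B) ⊗ₜ[k] x i) • p))
      = ((1 : B) ⊗ₜ[k] (y i * x i)) • p := by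
    intro i
    rw [map_smul, hghp, ← mul_smul, tt]
  simp_rw [this]
  rw [← Finset.sum_smul, ← tmul_sum, h1]
  exact one_smul _ p

end Helpers

attribute [local instance] Algebra.TensorProduct.rightAlgebra

/-- STATEMENT 15: the scalar extension of a hereditary finite-dimensional `k`-algebra
along a finite separable field extension `K/k` is a hereditary finite-dimensional
`K`-algebra. -/
theorem stmt15 (k K : Type) [Field k] [Field K] [Algebra k K]
    [FiniteDimensional k K] [Algebra.IsSeparable k K]
    (B : Type) [Ring B] [Algebra k B] [FiniteDimensional k B]
    (hB : IsHereditaryRing B) :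
    IsHereditaryRing (B ⊗[k] K) ∧ FiniteDimensional K (B ⊗[k] K) := by
  constructor
  · intro M _ _ hM N
    set f : B →+* B ⊗[k] K := Algebra.TensorProduct.includeLeftRingHom (R := k) with hf
    letI instM : Module B M := Module.compHom M f
    have hBM : Module.Projective B M :=
      proj_trans f (smul_eq_includeLeft_mul k K B) (proj_left k K B) M hM
    let N' : Submodule B M :=
      { carrier := N
        add_mem' := fun ha hb => N.add_mem ha hb
        zero_mem' := N.zero_mem
        smul_mem' := fun c m hm => N.smul_mem (f c) hm }
    have hN' : Module.Projective B N' := hB M hBM N'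
    have hN : @Module.Projective B _ N _ (Module.compHom N f) := hN'
    exact proj_ascend k K B N hN
  · haveI : IsScalarTower k K (B ⊗[k] K) :=
      IsScalarTower.of_algebraMap_eq fun r => by
        rw [Algebra.TensorProduct.algebraMap_apply,
          show (algebraMap K (B ⊗[k] K)) (algebraMap k K r) = 1 ⊗ₜ[k] algebraMap k K r from rfl,
          Algebra.algebraMap_eq_smul_one (A := B), Algebra.algebraMap_eq_smul_one (A := K),
          smul_tmul]
    haveI : Module.Finite k (B ⊗[k] K) := inferInstance
    exact Module.Finite.of_restrictScalars_finite k K (B ⊗[k] K)
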